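/- Suppose f : 𝒟 → ℝⁿ is almost locally Lipschitz, satisfies condition (F), f(U) is bounded whenever U ⊆ 𝒟 is bounded, and the set {x_t^φ : t ∈ [0,α)} is bounded whenever φ ∈ V_𝒟, α < ∞ and a solution x^φ is defined on [−h,α). Let φ ∈ V_𝒟, let x^φ : [−h,∞) → ℝⁿ be the (unique, global) solution of x'(t) = f(x_t), x₀ = φ, and suppose x^φ(t) → x* ∈ ℝⁿ as t → ∞. Then the constant function φ* ∈ 𝒞 with value x* belongs to 𝒟, and x* is an equilibrium: f(φ*) = 0 (equivalently, the constant function t ↦ x* on [−h,∞) is a solution of the DDE through φ*). -/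
import Mathlib


open scoped ENNReal

noncomputable section

/-- The state space 𝒞 = C([-h,0], ℝⁿ) with the sup-norm. -/
abbrev Hist (h : ℝ) (n : ℕ) : Type :=
  C(Set.Icc (-h) (0:ℝ), Fin n → ℝ)

/-- The segment x_t ∈ 𝒞 of a continuous function x : ℝ → ℝⁿ, x_t(θ) = x(t+θ). -/
def seg {h : ℝ} {n : ℕ} (x : C(ℝ, Fin n → ℝ)) (t : ℝ) : Hist h n :=
  ⟨fun θ => x (t + θ.1), x.continuous.comp (continuous_const.add continuous_subtype_val)⟩

/-- `LipBdd R φ` means `lip φ ≤ R`, i.e. φ is R-Lipschitz. -/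
def LipBdd {h : ℝ} {n : ℕ} (R : ℝ) (φ : Hist h n) : Prop :=
  ∀ s t : Set.Icc (-h) (0:ℝ), ‖φ s - φ t‖ ≤ R * |s.1 - t.1|

/-- `lip φ < ∞`. -/
def LipFin {h : ℝ} {n : ℕ} (φ : Hist h n) : Prop := ∃ R : ℝ, LipBdd R φ

/-- V(φ₀; δ, R) = { φ : ‖φ-φ₀‖ ≤ δ, lip φ ≤ R }. -/
def Vset {h : ℝ} {n : ℕ} (φ₀ : Hist h n) (δ R : ℝ) : Set (Hist h n) :=
  {φ | ‖φ - φ₀‖ ≤ δ ∧ LipBdd R φ}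

/-- A functional f : 𝒟 ⊆ 𝒞 → E is almost locally Lipschitz. -/
def AlmostLocLip {h : ℝ} {n : ℕ} (𝒟 : Set (Hist h n)) {E : Type*} [NormedAddCommGroup E]
    (f : Hist h n → E) : Prop :=
  ContinuousOn f 𝒟 ∧ ∀ φ₀ ∈ 𝒟, ∀ R : ℝ, 0 < R → ∃ δ : ℝ, 0 < δ ∧ ∃ k : ℝ, 0 ≤ k ∧
    ∀ φ ∈ Vset φ₀ δ R ∩ 𝒟, ∀ ψ ∈ Vset φ₀ δ R ∩ 𝒟, ‖f φ - f ψ‖ ≤ k * ‖φ - ψ‖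

/-- Solution of x'(t) = f(x_t) (t₀ ≤ t ≤ t₀+α), x_{t₀} = φ, on the closed interval
[t₀-h, t₀+α], for a functional with domain 𝒟. -/
def IsSolIcc {h : ℝ} {n : ℕ} (𝒟 : Set (Hist h n)) (f : Hist h n → Fin n → ℝ)
    (t₀ α : ℝ) (φ : Hist h n) (x : C(ℝ, Fin n → ℝ)) : Prop :=
  seg x t₀ = φ ∧ ∀ t ∈ Set.Icc t₀ (t₀ + α),
    seg (h := h) x t ∈ 𝒟 ∧ HasDerivAt (fun s => x s) (f (seg x t)) t

/-- Solution on the half-open interval [t₀-h, t₀+c), where c ∈ (0,∞]. -/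
def IsSolIco {h : ℝ} {n : ℕ} (𝒟 : Set (Hist h n)) (f : Hist h n → Fin n → ℝ)
    (t₀ : ℝ) (c : ℝ≥0∞) (φ : Hist h n) (x : C(ℝ, Fin n → ℝ)) : Prop :=
  seg x t₀ = φ ∧ ∀ t : ℝ, t₀ ≤ t → ENNReal.ofReal (t - t₀) < c →
    seg (h := h) x t ∈ 𝒟 ∧ HasDerivAt (fun s => x s) (f (seg x t)) t

/-- A non-continuable solution on [t₀-h, t₀+c): it admits no extension to a solution
on a strictly larger interval. -/
def Noncontinuable {h : ℝ} {n : ℕ} (𝒟 : Set (Hist h n)) (f : Hist h n → Fin n → ℝ)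
    (t₀ : ℝ) (c : ℝ≥0∞) (φ : Hist h n) (x : C(ℝ, Fin n → ℝ)) : Prop :=
  IsSolIco 𝒟 f t₀ c φ x ∧
    ¬ ∃ c' : ℝ≥0∞, c < c' ∧ ∃ x' : C(ℝ, Fin n → ℝ), IsSolIco 𝒟 f t₀ c' φ x' ∧
      ∀ t : ℝ, t₀ - h ≤ t → ENNReal.ofReal (t - t₀) < c → x' t = x t


/-- 𝒟 = C([-h,0], [-B,∞)ⁿ). -/
def Dom (h : ℝ) (n : ℕ) (B : ℝ) : Set (Hist h n) := {φ | ∀ θ, ∀ i, -B ≤ φ θ i}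

/-- The retraction ρ : 𝒞 → 𝒟, ρᵢ(φ)(θ) = r(φᵢ(θ)) with r(u) = max(u, -B). -/
def clampMap (h : ℝ) (n : ℕ) (B : ℝ) (φ : Hist h n) : Hist h n :=
  ⟨fun θ i => max (φ θ i) (-B), by
    refine continuous_pi fun i => ?_
    exact ((continuous_apply i).comp φ.continuous).max continuous_const⟩

/-- The point 0 ∈ [-h, 0]. -/
def zeroPt (h : ℝ) (hh : 0 < h) : Set.Icc (-h) (0:ℝ) :=
  ⟨0, Set.mem_Icc.mpr ⟨by linarith, le_refl 0⟩⟩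

/-- Global solution of x'(t) = f(x_t) (t ≥ 0), x₀ = φ, on [-h, ∞). -/
def IsSolGlobal {h : ℝ} {n : ℕ} (𝒟 : Set (Hist h n)) (f : Hist h n → Fin n → ℝ)
    (φ : Hist h n) (x : C(ℝ, Fin n → ℝ)) : Prop :=
  seg x 0 = φ ∧ ∀ t : ℝ, 0 ≤ t →
    seg (h := h) x t ∈ 𝒟 ∧ HasDerivAt (fun s => x s) (f (seg x t)) t

/-- Corollary 2.20. If the global solution x^φ converges to x* ∈ ℝⁿ as
t → ∞, then the constant history φ* ≡ x* lies in 𝒟 and x* is an equilibrium: f(φ*) = 0,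
equivalently the constant function is a solution through φ*. -/
theorem statement8 (h : ℝ) (hh : 0 < h) (n : ℕ) (hn : 1 ≤ n) (B : ℝ)
    (f : Hist h n → Fin n → ℝ) (hf : AlmostLocLip (Dom h n B) f)
    (hFcond : ∀ φ ∈ Dom h n B, ∀ i : Fin n, φ (zeroPt h hh) i = -B → 0 ≤ f φ i)
    (hbdd : ∀ U ⊆ Dom h n B, Bornology.IsBounded U → Bornology.IsBounded (f '' U))
    (hsegbdd : ∀ φ ∈ Dom h n B, LipFin φ → ∀ (α : ℝ) (x : C(ℝ, Fin n → ℝ)),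
      IsSolIco (Dom h n B) f 0 (ENNReal.ofReal α) φ x →
      Bornology.IsBounded (seg (h := h) x '' Set.Ico 0 α))
    (φ : Hist h n) (hφD : φ ∈ Dom h n B) (hφlip : LipFin φ)
    (x : C(ℝ, Fin n → ℝ)) (hx : IsSolGlobal (Dom h n B) f φ x)
    (xstar : Fin n → ℝ)
    (hconv : Filter.Tendsto (fun t => x t) Filter.atTop (nhds xstar)) :
    (ContinuousMap.const (Set.Icc (-h) (0:ℝ)) xstar : Hist h n) ∈ Dom h n B ∧
    f (ContinuousMap.const (Set.Icc (-h) (0:ℝ)) xstar) = 0 ∧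
    IsSolGlobal (Dom h n B) f (ContinuousMap.const (Set.Icc (-h) (0:ℝ)) xstar)
      (ContinuousMap.const ℝ xstar) := by
  set ψ : Hist h n := ContinuousMap.const (Set.Icc (-h) (0:ℝ)) xstar with hψ
  -- componentwise convergence of x
  have hxi : ∀ i : Fin n, Filter.Tendsto (fun t => x t i) Filter.atTop (nhds (xstar i)) :=
    fun i => ((continuous_apply i).continuousAt).tendsto.comp hconv
  -- ψ ∈ Dom
  have hmemD : ψ ∈ Dom h n B := by
    intro θ i
    refine ge_of_tendsto (hxi i) ?_
    refine Filter.eventually_atTop.2 ⟨0, fun t ht => ?_⟩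
    have := (hx.2 t ht).1 (zeroPt h hh) i
    simpa [seg, Dom, zeroPt] using this
  -- segments converge to ψ
  have hsegconv : Filter.Tendsto (fun t => seg (h := h) x t) Filter.atTop (nhds ψ) := by
    rw [Metric.tendsto_atTop]
    intro ε εpos
    obtain ⟨N, hN⟩ := Metric.tendsto_atTop.1 hconv (ε / 2) (half_pos εpos)
    refine ⟨N + h, fun t ht => ?_⟩
    have hle : dist (seg (h := h) x t) ψ ≤ ε / 2 := by
      refine ContinuousMap.dist_le (half_pos εpos).le |>.2 fun θ => ?_
      have hθ := θ.2.1
      have : N ≤ t + θ.1 := by linarith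
      exact (hN (t + θ.1) this).le
    linarith
  -- segments are eventually in Dom
  have hsegmem : ∀ᶠ t in Filter.atTop, seg (h := h) x t ∈ Dom h n B :=
    Filter.eventually_atTop.2 ⟨0, fun t ht => (hx.2 t ht).1⟩
  -- f(seg x t) → f ψ
  have hfconv : Filter.Tendsto (fun t => f (seg (h := h) x t)) Filter.atTop (nhds (f ψ)) := by
    have hcw : ContinuousWithinAt f (Dom h n B) ψ := hf.1 ψ hmemD
    exact hcw.tendsto.comp (tendsto_nhdsWithin_iff.2 ⟨hsegconv, hsegmem⟩)
  have hfi : ∀ i : Fin n, Filter.Tendsto (fun t => f (seg (h := h) x t) i)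
      Filter.atTop (nhds (f ψ i)) :=
    fun i => ((continuous_apply i).continuousAt).tendsto.comp hfconv
  -- f ψ = 0
  have hzero : f ψ = 0 := by
    funext i
    by_contra hvi
    have habs : (0:ℝ) < |f ψ i| := abs_pos.mpr hvi
    set ε : ℝ := |f ψ i| / 4 with hε
    have εpos : 0 < ε := by positivity
    obtain ⟨T₀, hT₀⟩ := Metric.tendsto_atTop.1 (hfi i) ε εpos
    obtain ⟨T₁, hT₁⟩ := Metric.tendsto_atTop.1 (hxi i) ε εpos
    set T : ℝ := max 0 (max T₀ T₁) with hT
    have hT0 : (0:ℝ) ≤ T := le_max_left _ _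
    have hTT₀ : T₀ ≤ T := le_trans (le_max_left _ _) (le_max_right _ _)
    have hTT₁ : T₁ ≤ T := le_trans (le_max_right _ _) (le_max_right _ _)
    obtain ⟨c, hc, hceq⟩ := exists_hasDerivAt_eq_slope (fun s => x s i)
      (fun s => f (seg (h := h) x s) i) (show T < T + 1 by linarith)
      (((continuous_apply i).comp x.continuous).continuousOn)
      (fun s hs => by
        have hs0 : (0:ℝ) ≤ s := le_of_lt (lt_of_le_of_lt hT0 hs.1)
        exact (hasDerivAt_pi.1 (hx.2 s hs0).2) i)
    have hb : f (seg (h := h) x c) i = x (T + 1) i - x T i := by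
      rw [hceq]; ring_nf
    have h1 : dist (f (seg (h := h) x c) i) (f ψ i) < ε := hT₀ c (le_of_lt (lt_of_le_of_lt hTT₀ hc.1))
    have h2 : dist (x (T + 1) i) (xstar i) < ε := hT₁ (T + 1) (by linarith)
    have h3 : dist (x T i) (xstar i) < ε := hT₁ T hTT₁
    rw [Real.dist_eq] at h1 h2 h3
    have e1 : |f ψ i| ≤ |f ψ i - f (seg (h := h) x c) i| + |f (seg (h := h) x c) i| := by
      calc |f ψ i| = |(f ψ i - f (seg (h := h) x c) i) + f (seg (h := h) x c) i| := by ring_nf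
        _ ≤ _ := abs_add_le _ _
    have e2 : |f (seg (h := h) x c) i| ≤ |x (T + 1) i - xstar i| + |x T i - xstar i| := by
      rw [hb]
      calc |x (T + 1) i - x T i| = |(x (T + 1) i - xstar i) - (x T i - xstar i)| := by ring_nf
        _ ≤ _ := abs_sub _ _
    have h1' : |f ψ i - f (seg (h := h) x c) i| < ε := by
      rw [abs_sub_comm]; exact h1
    linarith
  refine ⟨hmemD, hzero, ?_⟩
  have hsegconst : ∀ t : ℝ, seg (h := h) (ContinuousMap.const ℝ xstar) t = ψ :=
    fun t => ContinuousMap.ext fun θ => rfl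
  refine ⟨hsegconst 0, fun t ht => ⟨by rw [hsegconst]; exact hmemD, ?_⟩⟩
  rw [hsegconst, hzero]
  simpa using hasDerivAt_const (𝕜 := ℝ) t xstar
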